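/- Let W : ℓ²(I) → H be a bounded linear operator on Hilbert spaces with W*W = c·Id for some constant c > 0, let g be a proper lsc convex function on H, and Φ = g ∘ (c⁻¹W*). Then prox_{γΦ}(x) = x − W((Id − prox_{c⁻¹γ g})(c⁻¹W* x)) for all x and γ > 0. -/

import Mathlib

set_option maxHeartbeats 800000


/-- Proximity operator of the pre-composition of a convex function with the
pseudo-inverse `c⁻¹W*` of a tight-frame analysis operator `W` (with `W*W = c·Id`):
`prox_{γΦ}(x) = x − W((Id − prox_{c⁻¹γ g})(c⁻¹W*x))` where `Φ = g ∘ (c⁻¹W*)` on `ℓ²(I)`. -/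
theorem prox_tight_frame_composition
    {I : Type*} [Countable I] {H : Type*}
    [NormedAddCommGroup H] [InnerProductSpace ℝ H] [CompleteSpace H]
    (W : H →L[ℝ] lp (fun _ : I => ℝ) 2) (c : ℝ) (hc : 0 < c)
    (htight : (ContinuousLinearMap.adjoint W) ∘L W = c • ContinuousLinearMap.id ℝ H)
    (g : H → EReal)
    (hproper_bot : ∀ z, g z ≠ ⊥) (hproper_top : ∃ z, g z ≠ ⊤)
    (hlsc : LowerSemicontinuous g)
    (hconvex : ∀ x y : H, ∀ a b : ℝ, 0 ≤ a → 0 ≤ b → a + b = 1 →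
      g (a • x + b • y) ≤ (a : EReal) * g x + (b : EReal) * g y)
    (γ : ℝ) (hγ : 0 < γ) (x : lp (fun _ : I => ℝ) 2) (q : H)
    -- `q = prox_{c⁻¹γ g}(c⁻¹ W* x)` :
    (hq : ∀ z : H,
      ((c⁻¹ * γ : ℝ) : EReal) * g q
          + ((‖c⁻¹ • (ContinuousLinearMap.adjoint W) x - q‖ ^ 2 / 2 : ℝ) : EReal)
        ≤ ((c⁻¹ * γ : ℝ) : EReal) * g z
          + ((‖c⁻¹ • (ContinuousLinearMap.adjoint W) x - z‖ ^ 2 / 2 : ℝ) : EReal)) :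
    -- then `x − W(c⁻¹W*x − q)` is `prox_{γΦ}(x)` for `Φ = g ∘ (c⁻¹W*)` :
    ∀ z : lp (fun _ : I => ℝ) 2,
      (γ : EReal) * g (c⁻¹ • (ContinuousLinearMap.adjoint W)
            (x - W (c⁻¹ • (ContinuousLinearMap.adjoint W) x - q)))
          + ((‖x - (x - W (c⁻¹ • (ContinuousLinearMap.adjoint W) x - q))‖ ^ 2 / 2 : ℝ) : EReal)
        ≤ (γ : EReal) * g (c⁻¹ • (ContinuousLinearMap.adjoint W) z)
          + ((‖x - z‖ ^ 2 / 2 : ℝ) : EReal) := by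
  classical
  intro z
  set Wa := ContinuousLinearMap.adjoint W with hWa
  have hWW : ∀ h : H, Wa (W h) = c • h := by
    intro h
    have := congrArg (fun T : H →L[ℝ] H => T h) htight
    simpa using this
  have hnormW : ∀ h : H, ‖W h‖ ^ 2 = c * ‖h‖ ^ 2 := by
    intro h
    have h1 : (inner ℝ (Wa (W h)) h : ℝ) = inner ℝ (W h) (W h) :=
      ContinuousLinearMap.adjoint_inner_left W h (W h)
    rw [hWW, real_inner_smul_left] at h1
    rw [← real_inner_self_eq_norm_sq, ← real_inner_self_eq_norm_sq, ← h1]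
  have hWaBound : ∀ v : lp (fun _ : I => ℝ) 2, ‖Wa v‖ ^ 2 ≤ c * ‖v‖ ^ 2 := by
    intro v
    have h1 : (inner ℝ (Wa v) (Wa v) : ℝ) = inner ℝ v (W (Wa v)) :=
      ContinuousLinearMap.adjoint_inner_left W (Wa v) v
    have h2 : (inner ℝ v (W (Wa v)) : ℝ) ≤ ‖v‖ * ‖W (Wa v)‖ := real_inner_le_norm _ _
    have h3 : ‖W (Wa v)‖ ^ 2 = c * ‖Wa v‖ ^ 2 := hnormW _
    have h4 : ‖Wa v‖ ^ 2 ≤ ‖v‖ * ‖W (Wa v)‖ := by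
      rw [← real_inner_self_eq_norm_sq, h1]; exact h2
    by_cases h0 : ‖Wa v‖ = 0
    · rw [h0]; norm_num; positivity
    · have ha : 0 < ‖Wa v‖ ^ 2 := by positivity
      have h5 : ‖Wa v‖ ^ 2 * ‖Wa v‖ ^ 2 ≤ (‖v‖ * ‖W (Wa v)‖) * (‖v‖ * ‖W (Wa v)‖) :=
        mul_self_le_mul_self (by positivity) h4
      have h6 : (‖v‖ * ‖W (Wa v)‖) * (‖v‖ * ‖W (Wa v)‖) = ‖v‖ ^ 2 * (c * ‖Wa v‖ ^ 2) := by
        rw [← h3]; ring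
      rw [h6] at h5
      nlinarith [ha, h5]
  set u : H := c⁻¹ • Wa x - q with hu
  have hAp : c⁻¹ • Wa (x - W u) = q := by
    rw [map_sub, hWW, smul_sub, smul_smul, inv_mul_cancel₀ hc.ne', one_smul, hu]
    abel
  have hxp : x - (x - W u) = W u := by abel
  obtain ⟨z₀, hz₀⟩ := hproper_top
  obtain ⟨r₀, hr₀⟩ : ∃ r : ℝ, g z₀ = (r : EReal) :=
    ⟨(g z₀).toReal, (EReal.coe_toReal hz₀ (hproper_bot z₀)).symm⟩
  have hcγ : (0:ℝ) < c⁻¹ * γ := by positivity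
  obtain ⟨s, hs⟩ : ∃ s : ℝ, g q = (s : EReal) := by
    refine ⟨(g q).toReal, (EReal.coe_toReal ?_ (hproper_bot q)).symm⟩
    intro htop
    have h7 := hq z₀
    rw [htop, hr₀, EReal.mul_top_of_pos (by exact_mod_cast hcγ), EReal.top_add_coe,
      ← EReal.coe_mul, ← EReal.coe_add] at h7
    exact not_le_of_gt (EReal.coe_lt_top _) h7
  rw [hAp, hxp, hs]
  rcases eq_or_ne (g (c⁻¹ • Wa z)) ⊤ with htop | hne
  · rw [htop, EReal.mul_top_of_pos (by exact_mod_cast hγ), EReal.top_add_coe]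
    exact le_top
  obtain ⟨r, hr⟩ : ∃ r : ℝ, g (c⁻¹ • Wa z) = (r : EReal) :=
    ⟨(g (c⁻¹ • Wa z)).toReal, (EReal.coe_toReal hne (hproper_bot _)).symm⟩
  rw [hr]
  have hq' := hq (c⁻¹ • Wa z)
  rw [hs, hr, ← EReal.coe_mul, ← EReal.coe_mul, ← EReal.coe_add, ← EReal.coe_add,
    EReal.coe_le_coe_iff] at hq'
  rw [← EReal.coe_mul, ← EReal.coe_mul, ← EReal.coe_add, ← EReal.coe_add,
    EReal.coe_le_coe_iff]
  have hdiff : c⁻¹ • Wa x - c⁻¹ • Wa z = c⁻¹ • Wa (x - z) := by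
    rw [map_sub, smul_sub]
  rw [hdiff] at hq'
  have hb := hWaBound (x - z)
  have hA2 : c * ‖c⁻¹ • Wa (x - z)‖ ^ 2 ≤ ‖x - z‖ ^ 2 := by
    rw [norm_smul, mul_pow]
    have he : ‖(c⁻¹ : ℝ)‖ ^ 2 = c⁻¹ * c⁻¹ := by
      rw [Real.norm_eq_abs, abs_of_pos (by positivity), sq]
    rw [he]
    calc c * (c⁻¹ * c⁻¹ * ‖Wa (x - z)‖ ^ 2) = c⁻¹ * ‖Wa (x - z)‖ ^ 2 := by
          field_simp
      _ ≤ c⁻¹ * (c * ‖x - z‖ ^ 2) := mul_le_mul_of_nonneg_left hb (by positivity)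
      _ = ‖x - z‖ ^ 2 := by field_simp
  have hmul : γ * s + c * ‖u‖ ^ 2 / 2 ≤ γ * r + c * ‖c⁻¹ • Wa (x - z)‖ ^ 2 / 2 := by
    calc γ * s + c * ‖u‖ ^ 2 / 2 = c * (c⁻¹ * γ * s + ‖u‖ ^ 2 / 2) := by
          field_simp
      _ ≤ c * (c⁻¹ * γ * r + ‖c⁻¹ • Wa (x - z)‖ ^ 2 / 2) :=
          mul_le_mul_of_nonneg_left hq' hc.le
      _ = γ * r + c * ‖c⁻¹ • Wa (x - z)‖ ^ 2 / 2 := by field_simp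
  rw [hnormW u]
  linarith [hA2, hmul]
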